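/- Let v_1, …, v_{n+1} ∈ ℤ^n be such that v_1 + ⋯ + v_{n+1} = 0 and every n of them form a ℤ-basis of ℤ^n. Then the collection of cones generated by the proper subsets of {v_1, …, v_{n+1}} forms a complete fan in ℝ^n, namely the fan of ℙ^n up to a lattice automorphism; in particular, any n of the vectors are linearly independent and the n+1 maximal cones ⟨v_1,…,v̂_i,…,v_{n+1}⟩ cover ℝ^n. -/

import Mathlib

/-- A polyhedral cone: the nonnegative hull of finitely many vectors. -/
def IsPolyhedralCone {n : ℕ} (σ : Set (Fin n → ℝ)) : Prop :=
  ∃ s : Finset (Fin n → ℝ),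
    σ = {x | ∃ c : (Fin n → ℝ) → ℝ, (∀ v, 0 ≤ c v) ∧ x = ∑ v ∈ s, c v • v}

/-- A cone is strongly convex if it contains no nonzero vector together with
its negative. -/
def StronglyConvex {n : ℕ} (σ : Set (Fin n → ℝ)) : Prop :=
  ∀ x ∈ σ, -x ∈ σ → x = 0

/-- `τ` is a face of `σ`. -/
def IsFaceOf {n : ℕ} (τ σ : Set (Fin n → ℝ)) : Prop :=
  ∃ f : (Fin n → ℝ) →ₗ[ℝ] ℝ, (∀ x ∈ σ, 0 ≤ f x) ∧ τ = {x ∈ σ | f x = 0}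

/-- A fan: a finite collection of strongly convex polyhedral cones, closed
under taking faces, such that the intersection of any two members is a face of
each. -/
def IsFan {n : ℕ} (Δ : Set (Set (Fin n → ℝ))) : Prop :=
  Δ.Finite ∧
  (∀ σ ∈ Δ, IsPolyhedralCone σ ∧ StronglyConvex σ) ∧
  (∀ σ ∈ Δ, ∀ τ, IsFaceOf τ σ → τ ∈ Δ) ∧
  (∀ σ ∈ Δ, ∀ σ' ∈ Δ, IsFaceOf (σ ∩ σ') σ ∧ IsFaceOf (σ ∩ σ') σ')

namespace Stmt16Aux
open Finset

variable {n : ℕ}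

/-- The cone generated by `vr i` for `i ∈ S`. -/
def cone (vr : Fin (n + 1) → (Fin n → ℝ)) (S : Finset (Fin (n + 1))) : Set (Fin n → ℝ) :=
  {x | ∃ c : Fin (n + 1) → ℝ, (∀ i, 0 ≤ c i) ∧ x = ∑ i ∈ S, c i • vr i}

lemma sum_subtype_ne {M : Type*} [AddCommMonoid M] (i₀ : Fin (n + 1)) (f : Fin (n + 1) → M) :
    ∑ j : {j : Fin (n + 1) // j ≠ i₀}, f j = ∑ k ∈ univ.erase i₀, f k :=
  (Finset.sum_subtype (univ.erase i₀) (fun x => by simp) f).symm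

lemma cone_mono {vr : Fin (n + 1) → (Fin n → ℝ)} {S T : Finset (Fin (n + 1))} (hST : S ⊆ T) :
    cone vr S ⊆ cone vr T := by
  rintro x ⟨c, hc, rfl⟩
  refine ⟨fun k => if k ∈ S then c k else 0, fun k => ?_, ?_⟩
  · by_cases h : k ∈ S <;> simp [h, hc k]
  rw [Finset.sum_congr rfl (fun i _ => (ite_smul _ _ _ _ : _ = ite (i ∈ S) (c i • vr i) ((0:ℝ) • vr i)))]
  simp only [zero_smul]
  rw [Finset.sum_ite_mem, Finset.inter_eq_right.mpr hST]

variable {vr : Fin (n + 1) → (Fin n → ℝ)} {i₀ : Fin (n + 1)}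
  {B : Module.Basis {j : Fin (n + 1) // j ≠ i₀} ℝ (Fin n → ℝ)}

lemma repr_eq (hB : ∀ j, B j = vr j) {S : Finset (Fin (n + 1))}
    (c : Fin (n + 1) → ℝ) {x : Fin n → ℝ} (hx : x = ∑ i ∈ S, c i • vr i) (hiS : i₀ ∉ S) :
    ⇑(B.repr x) = fun j : {j : Fin (n + 1) // j ≠ i₀} => if (j : Fin (n + 1)) ∈ S then c ↑j else 0 := by
  have hx' : x = ∑ j : {j : Fin (n + 1) // j ≠ i₀},
      (if (j : Fin (n + 1)) ∈ S then c j else 0) • B j := by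
    rw [Finset.sum_congr rfl (fun j _ => by rw [hB j]),
      sum_subtype_ne i₀ (fun k => (if k ∈ S then c k else 0) • vr k)]
    rw [Finset.sum_congr rfl
      (fun i _ => (ite_smul _ _ _ _ : _ = ite (i ∈ S) (c i • vr i) ((0:ℝ) • vr i)))]
    simp only [zero_smul]
    rw [Finset.sum_ite_mem, Finset.inter_eq_right.mpr
      (fun k hk => Finset.mem_erase.mpr ⟨fun h => hiS (by rwa [h] at hk), Finset.mem_univ k⟩), hx]
  rw [hx', B.repr_sum_self]

lemma mem_cone_iff (hB : ∀ j, B j = vr j) {S : Finset (Fin (n + 1))} (hiS : i₀ ∉ S)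
    (x : Fin n → ℝ) :
    x ∈ cone vr S ↔ (∀ j, 0 ≤ B.repr x j) ∧
      (∀ j : {j : Fin (n + 1) // j ≠ i₀}, (j : Fin (n + 1)) ∉ S → B.repr x j = 0) := by
  constructor
  · rintro ⟨c, hc, rfl⟩
    rw [show ⇑(B.repr _) = _ from repr_eq hB c rfl hiS]
    exact ⟨fun j => by dsimp only; split <;> [exact hc _; rfl],
      fun j hj => by simp [hj]⟩
  · rintro ⟨h1, h2⟩
    refine ⟨fun k => if h : k = i₀ then 0 else B.repr x ⟨k, h⟩, fun k => ?_, ?_⟩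
    · dsimp only; split <;> [rfl; exact h1 _]
    · symm
      calc ∑ i ∈ S, (fun k => if h : k = i₀ then 0 else B.repr x ⟨k, h⟩) i • vr i
          = ∑ k ∈ univ.erase i₀,
              (fun k => if h : k = i₀ then 0 else B.repr x ⟨k, h⟩) k • vr k := by
            refine Finset.sum_subset
              (fun k hk => Finset.mem_erase.mpr ⟨fun h => hiS (by rwa [h] at hk), Finset.mem_univ k⟩)
              (fun k hk hkS => ?_)
            have hk' : k ≠ i₀ := (Finset.mem_erase.mp hk).1
            simp only [dif_neg hk', h2 ⟨k, hk'⟩ hkS, zero_smul]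
        _ = ∑ j : {j : Fin (n + 1) // j ≠ i₀},
              (fun k => if h : k = i₀ then 0 else B.repr x ⟨k, h⟩) j.1 • vr j.1 :=
            (sum_subtype_ne i₀ _).symm
        _ = ∑ j : {j : Fin (n + 1) // j ≠ i₀}, B.repr x j • B j := by
            refine Finset.sum_congr rfl (fun j _ => ?_)
            rcases j with ⟨k, hk⟩
            simp only [dif_neg hk, hB ⟨k, hk⟩]
        _ = x := B.sum_repr x


lemma isFaceOf_cone (hB : ∀ j, B j = vr j) {S S' : Finset (Fin (n + 1))}
    (hiS : i₀ ∉ S) (hS' : S' ⊆ S) :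
    IsFaceOf (cone vr S') (cone vr S) := by
  classical
  have hiS' : i₀ ∉ S' := fun h => hiS (hS' h)
  set T : Finset {j : Fin (n + 1) // j ≠ i₀} :=
    univ.filter (fun j => (j : Fin (n + 1)) ∈ S ∧ (j : Fin (n + 1)) ∉ S') with hT
  refine ⟨∑ j ∈ T, B.coord j, fun x hx => ?_, ?_⟩
  · have h := (mem_cone_iff hB hiS x).mp hx
    rw [LinearMap.sum_apply]
    exact Finset.sum_nonneg fun j _ => by rw [B.coord_apply]; exact h.1 j
  · ext x
    simp only [Set.mem_setOf_eq, LinearMap.sum_apply, Module.Basis.coord_apply]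
    constructor
    · intro hx
      have h := (mem_cone_iff hB hiS' x).mp hx
      refine ⟨cone_mono hS' hx, Finset.sum_eq_zero fun j hj => ?_⟩
      exact h.2 j (by simp [hT] at hj; exact hj.2)
    · rintro ⟨hxS, hf⟩
      have h := (mem_cone_iff hB hiS x).mp hxS
      have hz : ∀ j ∈ T, B.repr x j = 0 :=
        (Finset.sum_eq_zero_iff_of_nonneg (fun j _ => h.1 j)).mp hf
      refine (mem_cone_iff hB hiS' x).mpr ⟨h.1, fun j hj => ?_⟩
      by_cases hjS : (j : Fin (n + 1)) ∈ S
      · exact hz j (by simp [hT, hjS, hj])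
      · exact h.2 j hjS

lemma stronglyConvex_cone (hB : ∀ j, B j = vr j) {S : Finset (Fin (n + 1))}
    (hiS : i₀ ∉ S) : StronglyConvex (cone vr S) := by
  intro x hx hnx
  have h1 := ((mem_cone_iff hB hiS x).mp hx).1
  have h2 := ((mem_cone_iff hB hiS (-x)).mp hnx).1
  have hz : ∀ j, B.repr x j = 0 := by
    intro j
    have := h2 j
    rw [map_neg] at this
    simp only [Finsupp.neg_apply, neg_nonneg] at this
    exact le_antisymm this (h1 j)
  have := (B.sum_repr x).symm
  rw [this]
  simp only [hz, zero_smul, Finset.sum_const_zero]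

lemma cone_inter_subset (hB : ∀ j, B j = vr j) (hsumr : ∑ i, vr i = 0)
    {S T : Finset (Fin (n + 1))} (hiS : i₀ ∉ S) (hT : T ≠ Finset.univ) :
    cone vr S ∩ cone vr T ⊆ cone vr (S ∩ T) := by
  classical
  rintro x ⟨hxS, hxT⟩
  have memS := (mem_cone_iff hB hiS x).mp hxS
  by_cases hi₀T : i₀ ∈ T
  · obtain ⟨c, hc, hxc⟩ := hxT
    -- compute the coordinates of x in the basis B
    have hsub : ∑ j : {j : Fin (n + 1) // j ≠ i₀}, vr j = -vr i₀ := by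
      rw [sum_subtype_ne i₀ vr, eq_neg_iff_add_eq_zero, Finset.sum_erase_add _ _ (mem_univ i₀),
        hsumr]
    have herase : ∑ i ∈ T.erase i₀, c i • vr i = x - c i₀ • vr i₀ := by
      rw [eq_sub_iff_add_eq, Finset.sum_erase_add _ _ hi₀T, hxc]
    have hrepr : ⇑(B.repr x) = fun j : {j : Fin (n + 1) // j ≠ i₀} =>
        (if (j : Fin (n + 1)) ∈ T then c j else 0) - c i₀ := by
      have hx' : x = ∑ j : {j : Fin (n + 1) // j ≠ i₀},
          ((if (j : Fin (n + 1)) ∈ T then c j else 0) - c i₀) • B j := by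
        rw [Finset.sum_congr rfl (fun j _ => by rw [hB j])]
        simp only [sub_smul, Finset.sum_sub_distrib, ← Finset.smul_sum]
        rw [show (∑ j : {j : Fin (n + 1) // j ≠ i₀},
            (if (j : Fin (n + 1)) ∈ T then c j else 0) • vr j) = x - c i₀ • vr i₀ from ?_,
          hsub, smul_neg, sub_neg_eq_add, sub_add_cancel]
        rw [sum_subtype_ne i₀ (fun k => (if k ∈ T then c k else 0) • vr k)]
        rw [Finset.sum_congr rfl
          (fun i _ => (ite_smul _ _ _ _ : _ = ite (i ∈ T) (c i • vr i) ((0:ℝ) • vr i)))]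
        simp only [zero_smul]
        rw [Finset.sum_ite_mem, Finset.erase_inter, Finset.univ_inter, ← herase]
      rw [hx', B.repr_sum_self]
    obtain ⟨j₁, hj₁⟩ : ∃ a, a ∉ T := by
      by_contra h; push_neg at h; exact hT (Finset.eq_univ_of_forall h)
    have hj₁i : j₁ ≠ i₀ := fun h => hj₁ (h ▸ hi₀T)
    have e1 : B.repr x ⟨j₁, hj₁i⟩ = -c i₀ := by rw [hrepr]; simp [hj₁]
    have hci₀ : c i₀ = 0 := by
      have h0 := memS.1 ⟨j₁, hj₁i⟩
      rw [e1] at h0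
      linarith [hc i₀]
    rw [hci₀, zero_smul, sub_zero] at herase
    have hxT' : x ∈ cone vr (T.erase i₀) := ⟨c, hc, herase.symm⟩
    have memT' := (mem_cone_iff hB (Finset.notMem_erase i₀ T) x).mp hxT'
    have hmem : x ∈ cone vr (S ∩ T.erase i₀) := by
      refine (mem_cone_iff hB (fun h => hiS (Finset.mem_of_mem_inter_left h)) x).mpr
        ⟨memS.1, fun j hj => ?_⟩
      rcases not_and_or.mp (fun hc => hj (Finset.mem_inter.mpr hc)) with h | h
      · exact memS.2 j h
      · exact memT'.2 j h
    refine cone_mono (fun k hk => ?_) hmem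
    simp only [Finset.mem_inter, Finset.mem_erase] at hk ⊢
    exact ⟨hk.1, hk.2.2⟩
  · have memT := (mem_cone_iff hB hi₀T x).mp hxT
    refine (mem_cone_iff hB (fun h => hiS (Finset.mem_of_mem_inter_left h)) x).mpr
      ⟨memS.1, fun j hj => ?_⟩
    rcases not_and_or.mp (fun hc => hj (Finset.mem_inter.mpr hc)) with h | h
    · exact memS.2 j h
    · exact memT.2 j h


/-- Coordinatewise integer-to-real cast, as a `ℤ`-linear map. -/
def castLM (n : ℕ) : (Fin n → ℤ) →ₗ[ℤ] (Fin n → ℝ) where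
  toFun x := fun k => (x k : ℝ)
  map_add' x y := by funext k; simp
  map_smul' m x := by funext k; simp [zsmul_eq_mul]

lemma span_top (v : Fin (n + 1) → (Fin n → ℤ))
    (hvr : ∀ i j, vr i j = ((v i j : ℤ) : ℝ)) (i : Fin (n + 1))
    (hsp : Submodule.span ℤ (Set.range (fun j : {j : Fin (n + 1) // j ≠ i} =>
      v (j : Fin (n + 1)))) = ⊤) :
    Submodule.span ℝ (Set.range (fun j : {j : Fin (n + 1) // j ≠ i} =>
      vr (j : Fin (n + 1)))) = ⊤ := by
  rw [eq_top_iff]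
  have key : ∀ y : Fin n → ℤ, castLM n y ∈
      Submodule.span ℝ (Set.range fun j : {j : Fin (n + 1) // j ≠ i} => vr j) := by
    intro y
    have hy : y ∈ Submodule.span ℤ (Set.range fun j : {j : Fin (n + 1) // j ≠ i} => v j) := by
      rw [hsp]; trivial
    have h2 : castLM n y ∈ Submodule.map (castLM n)
        (Submodule.span ℤ (Set.range fun j : {j : Fin (n + 1) // j ≠ i} => v j)) :=
      Submodule.mem_map_of_mem hy
    rw [Submodule.map_span] at h2
    have himg : castLM n '' (Set.range fun j : {j : Fin (n + 1) // j ≠ i} => v j) =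
        Set.range fun j : {j : Fin (n + 1) // j ≠ i} => vr j := by
      rw [← Set.range_comp]
      refine congrArg _ (funext fun j => funext fun k => ?_)
      simp [castLM, hvr]
    rw [himg] at h2
    exact Submodule.span_le_restrictScalars ℤ ℝ _ h2
  rw [← (Pi.basisFun ℝ (Fin n)).span_eq]
  refine Submodule.span_le.mpr ?_
  rintro _ ⟨k, rfl⟩
  have : (Pi.basisFun ℝ (Fin n)) k = castLM n (Pi.single k 1) := by
    classical
    rw [Pi.basisFun_apply]
    funext l
    by_cases h : l = k
    · subst h; simp [castLM]
    · simp [castLM, Pi.single_eq_of_ne h]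
  rw [this]
  exact key _

lemma exists_basisR (v : Fin (n + 1) → (Fin n → ℤ))
    (hvr : ∀ i j, vr i j = ((v i j : ℤ) : ℝ)) (i : Fin (n + 1))
    (hsp : Submodule.span ℤ (Set.range (fun j : {j : Fin (n + 1) // j ≠ i} =>
      v (j : Fin (n + 1)))) = ⊤) :
    ∃ B : Module.Basis {j : Fin (n + 1) // j ≠ i} ℝ (Fin n → ℝ), ∀ j, B j = vr j := by
  classical
  have hcard : Fintype.card {j : Fin (n + 1) // j ≠ i} =
      Module.finrank ℝ (Fin n → ℝ) := by
    rw [Module.finrank_fintype_fun_eq_card, Fintype.card_fin]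
    rw [Fintype.card_subtype_compl (· = i), Fintype.card_subtype_eq, Fintype.card_fin]
    omega
  refine ⟨basisOfTopLeSpanOfCardEqFinrank
    (fun j : {j : Fin (n + 1) // j ≠ i} => vr j) (span_top v hvr i hsp).ge hcard, fun j => ?_⟩
  rw [coe_basisOfTopLeSpanOfCardEqFinrank]

lemma vr_injective (v : Fin (n + 1) → (Fin n → ℤ)) (hsum : ∑ i, v i = 0)
    (hvr : ∀ i j, vr i j = ((v i j : ℤ) : ℝ))
    (hbasis : ∀ i : Fin (n + 1),
      LinearIndependent ℤ (fun j : {j : Fin (n + 1) // j ≠ i} => v (j : Fin (n + 1))) ∧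
      Submodule.span ℤ (Set.range (fun j : {j : Fin (n + 1) // j ≠ i} =>
        v (j : Fin (n + 1)))) = ⊤) :
    Function.Injective vr := by
  classical
  intro i j hij
  by_contra hne
  have hv : v i = v j := by
    funext k
    have := congrFun hij k
    rw [hvr, hvr] at this
    exact_mod_cast this
  have li := (hbasis j).1
  set g : {k : Fin (n + 1) // k ≠ j} → ℤ := fun k => if k = ⟨i, hne⟩ then 2 else 1 with hg
  have hrel : ∑ k : {k : Fin (n + 1) // k ≠ j}, g k • v k = 0 := by
    have hsplit : ∀ k : {k : Fin (n + 1) // k ≠ j},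
        g k • v (k : Fin (n + 1)) = v k + (if k = ⟨i, hne⟩ then v (k : Fin (n + 1)) else 0) := by
      intro k
      by_cases h : k = ⟨i, hne⟩ <;> simp [hg, h, two_smul]
    rw [Finset.sum_congr rfl (fun k _ => hsplit k), Finset.sum_add_distrib,
      Finset.sum_ite_eq' univ (⟨i, hne⟩ : {k : Fin (n + 1) // k ≠ j})
        (fun k => v (k : Fin (n + 1)))]
    simp only [Finset.mem_univ, if_true]
    rw [sum_subtype_ne j v]
    have : ∑ k ∈ univ.erase j, v k = -v j := by
      rw [eq_neg_iff_add_eq_zero, Finset.sum_erase_add _ _ (mem_univ j), hsum]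
    rw [this, hv]
    abel
  have := Fintype.linearIndependent_iff.mp li g hrel ⟨i, hne⟩
  rw [hg] at this
  simp at this

lemma isPolyhedral_cone (hinj : Function.Injective vr) (S : Finset (Fin (n + 1))) :
    IsPolyhedralCone (cone vr S) := by
  classical
  refine ⟨S.image vr, ?_⟩
  ext x
  simp only [cone, Set.mem_setOf_eq]
  constructor
  · rintro ⟨c, hc, rfl⟩
    refine ⟨fun u => if h : ∃ k, vr k = u then c h.choose else 0, fun u => ?_, ?_⟩
    · dsimp only; split
      · exact hc _
      · exact le_rfl
    · rw [Finset.sum_image (fun a _ b _ h => hinj h)]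
      refine Finset.sum_congr rfl fun k _ => ?_
      have h : ∃ k', vr k' = vr k := ⟨k, rfl⟩
      show c k • vr k = (dite (∃ k', vr k' = vr k) (fun h => c h.choose) fun _ => 0) • vr k
      rw [dif_pos h, hinj h.choose_spec]
  · rintro ⟨c, hc, rfl⟩
    exact ⟨fun k => c (vr k), fun k => hc _,
      by rw [Finset.sum_image (fun a _ b _ h => hinj h)]⟩

lemma covering (hB : ∀ j, B j = vr j) (hsumr : ∑ i, vr i = 0) (x : Fin n → ℝ) :
    ∃ S : Finset (Fin (n + 1)), S ≠ univ ∧ x ∈ cone vr S := by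
  classical
  set a : {j : Fin (n + 1) // j ≠ i₀} → ℝ := fun j => B.repr x j with ha
  have hsplit : ∀ f : Fin (n + 1) → (Fin n → ℝ), f i₀ = 0 →
      ∑ k, f k = ∑ j : {j : Fin (n + 1) // j ≠ i₀}, f j := by
    intro f hf
    rw [sum_subtype_ne i₀ f, ← Finset.sum_erase_add univ f (mem_univ i₀), hf, add_zero]
  by_cases hpos : ∀ j, 0 ≤ a j
  · refine ⟨univ.erase i₀, Finset.erase_ne_self.mpr (mem_univ i₀), ?_⟩
    exact (mem_cone_iff hB (Finset.notMem_erase i₀ univ) x).mpr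
      ⟨hpos, fun j hj => absurd (Finset.mem_erase.mpr ⟨j.2, mem_univ _⟩) hj⟩
  · push_neg at hpos
    obtain ⟨j₀, hj₀⟩ := hpos
    obtain ⟨jm, _, hmin⟩ := Finset.exists_min_image univ a ⟨j₀, mem_univ _⟩
    set c : Fin (n + 1) → ℝ := fun k => (if h : k = i₀ then 0 else a ⟨k, h⟩) - a jm with hc
    have hc0 : ∀ k, 0 ≤ c k := by
      intro k
      rw [hc]
      dsimp only
      split
      · have : a jm ≤ a j₀ := hmin j₀ (mem_univ _)
        simp; linarith
      · simp only [sub_nonneg]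
        exact hmin _ (mem_univ _)
    have hcjm : c (jm : Fin (n + 1)) = 0 := by
      rw [hc]; dsimp only; rw [dif_neg jm.2]; simp [ha]
    refine ⟨univ.erase (jm : Fin (n + 1)),
      Finset.erase_ne_self.mpr (mem_univ _), c, hc0, ?_⟩
    have h1 : ∑ k ∈ univ.erase (jm : Fin (n + 1)), c k • vr k = ∑ k, c k • vr k := by
      rw [← Finset.sum_erase_add univ (fun k => c k • vr k) (mem_univ (jm : Fin (n + 1))),
        hcjm, zero_smul, add_zero]
    have h2 : ∑ k, c k • vr k = x := by
      have : ∀ k, c k • vr k =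
          (if h : k = i₀ then 0 else a ⟨k, h⟩) • vr k - a jm • vr k := by
        intro k; rw [hc]; dsimp only; rw [sub_smul]
      rw [Finset.sum_congr rfl (fun k _ => this k), Finset.sum_sub_distrib,
        ← Finset.smul_sum, hsumr, smul_zero, sub_zero]
      rw [hsplit _ (by rw [dif_pos rfl, zero_smul])]
      rw [Finset.sum_congr rfl (fun j (_ : j ∈ univ) => by rw [dif_neg j.2, Subtype.coe_eta, ← hB j])]
      exact B.sum_repr x
    rw [h1, h2]


lemma exists_psi (v : Fin (n + 1) → (Fin n → ℤ)) (hsum : ∑ i, v i = 0)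
    (hbasis : ∀ i : Fin (n + 1),
      LinearIndependent ℤ (fun j : {j : Fin (n + 1) // j ≠ i} => v (j : Fin (n + 1))) ∧
      Submodule.span ℤ (Set.range (fun j : {j : Fin (n + 1) // j ≠ i} =>
        v (j : Fin (n + 1)))) = ⊤)
    (w : Fin (n + 1) → (Fin n → ℤ))
    (hw : ∀ (i : Fin (n + 1)) (h : (i : ℕ) < n), w i = Pi.single (⟨i, h⟩ : Fin n) 1)
    (hwlast : w (Fin.last n) = -∑ j : Fin n, Pi.single j 1) :
    ∃ (ψ : (Fin n → ℤ) ≃ₗ[ℤ] (Fin n → ℤ)) (τ : Equiv.Perm (Fin (n + 1))),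
      ∀ i, ψ (v i) = w (τ i) := by
  classical
  have li := (hbasis (Fin.last n)).1
  have sp := (hbasis (Fin.last n)).2
  let Bz : Module.Basis {j : Fin (n + 1) // j ≠ Fin.last n} ℤ (Fin n → ℤ) :=
    Module.Basis.mk li (by rw [sp])
  have hne_lt : ∀ j : {j : Fin (n + 1) // j ≠ Fin.last n}, (j : Fin (n + 1)).1 < n := by
    intro j
    have h1 : (j : Fin (n + 1)).1 < n + 1 := (j : Fin (n + 1)).2
    have h2 : (j : Fin (n + 1)).1 ≠ n := fun h => j.2 (Fin.ext h)
    omega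
  let e : {j : Fin (n + 1) // j ≠ Fin.last n} ≃ Fin n :=
    { toFun := fun j => ⟨(j : Fin (n + 1)).1, hne_lt j⟩
      invFun := fun k => ⟨⟨k.1, Nat.lt_succ_of_lt k.2⟩, fun h => by
        have := congrArg Fin.val h
        simp only [Fin.val_last] at this
        omega⟩
      left_inv := fun j => Subtype.ext (Fin.ext rfl)
      right_inv := fun k => rfl }
  refine ⟨Bz.equiv (Pi.basisFun ℤ (Fin n)) e, Equiv.refl _, fun i => ?_⟩
  have hψj : ∀ j : {j : Fin (n + 1) // j ≠ Fin.last n},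
      Bz.equiv (Pi.basisFun ℤ (Fin n)) e (v (j : Fin (n + 1))) = Pi.single (e j) 1 := by
    intro j
    have : v (j : Fin (n + 1)) = Bz j := (Module.Basis.mk_apply li _ j).symm
    rw [this, Module.Basis.equiv_apply, Pi.basisFun_apply]
  by_cases hi : i = Fin.last n
  · subst hi
    have hvlast : v (Fin.last n) = -∑ j : {j : Fin (n + 1) // j ≠ Fin.last n},
        v (j : Fin (n + 1)) := by
      rw [eq_neg_iff_add_eq_zero, sum_subtype_ne (Fin.last n) v, add_comm,
        Finset.sum_erase_add _ _ (mem_univ (Fin.last n)), hsum]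
    rw [Equiv.refl_apply, hvlast, map_neg, map_sum, hwlast]
    rw [Finset.sum_congr rfl (fun j _ => hψj j)]
    rw [← Equiv.sum_comp e (fun k => (Pi.single k 1 : Fin n → ℤ))]
  · have hlt : (i : ℕ) < n := hne_lt ⟨i, hi⟩
    rw [Equiv.refl_apply, hw i hlt, hψj ⟨i, hi⟩]
    rfl


lemma mem_cone_self {S : Finset (Fin (n + 1))} {k : Fin (n + 1)} (hk : k ∈ S) :
    vr k ∈ cone vr S := by
  classical
  refine ⟨fun l => if l = k then 1 else 0, fun l => by dsimp only; split <;> norm_num, ?_⟩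
  rw [Finset.sum_congr rfl (fun l _ =>
    (ite_smul _ _ _ _ : _ = ite (l = k) ((1:ℝ) • vr l) ((0:ℝ) • vr l)))]
  simp only [one_smul, zero_smul]
  rw [Finset.sum_ite_eq' S k (fun l => vr l), if_pos hk]

end Stmt16Aux

open Stmt16Aux Finset

/-- If `v 0, …, v n ∈ ℤⁿ` sum to zero and every `n` of them form a `ℤ`-basis of
`ℤⁿ`, then the cones generated by the proper subsets of `{v 0, …, v n}` form a
complete fan in `ℝⁿ` (the fan of `ℙⁿ` up to a lattice automorphism): any `n` of
the vectors are linearly independent, the cones cover `ℝⁿ`, and a lattice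
automorphism carries the `v i` to the standard generators
`e₁, …, eₙ, -e₁ - ⋯ - eₙ`. -/
theorem stmt_16 {n : ℕ} (v : Fin (n + 1) → (Fin n → ℤ))
    (hsum : ∑ i, v i = 0)
    (hbasis : ∀ i : Fin (n + 1),
      LinearIndependent ℤ (fun j : {j : Fin (n + 1) // j ≠ i} => v (j : Fin (n + 1))) ∧
      Submodule.span ℤ (Set.range (fun j : {j : Fin (n + 1) // j ≠ i} =>
        v (j : Fin (n + 1)))) = ⊤)
    (vr : Fin (n + 1) → (Fin n → ℝ)) (hvr : ∀ i j, vr i j = ((v i j : ℤ) : ℝ))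
    (Δ : Set (Set (Fin n → ℝ)))
    (hΔ : Δ = {σ | ∃ S : Finset (Fin (n + 1)), S ≠ Finset.univ ∧
      σ = {x | ∃ c : Fin (n + 1) → ℝ, (∀ i, 0 ≤ c i) ∧ x = ∑ i ∈ S, c i • vr i}})
    (w : Fin (n + 1) → (Fin n → ℤ))
    (hw : ∀ (i : Fin (n + 1)) (h : (i : ℕ) < n), w i = Pi.single (⟨i, h⟩ : Fin n) 1)
    (hwlast : w (Fin.last n) = -∑ j : Fin n, Pi.single j 1) :
    IsFan Δ ∧ ⋃₀ Δ = Set.univ ∧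
      (∀ i : Fin (n + 1), LinearIndependent ℝ
        (fun j : {j : Fin (n + 1) // j ≠ i} => vr (j : Fin (n + 1)))) ∧
      ∃ (ψ : (Fin n → ℤ) ≃ₗ[ℤ] (Fin n → ℤ)) (τ : Equiv.Perm (Fin (n + 1))),
        ∀ i, ψ (v i) = w (τ i) := by
  classical
  -- the real vectors also sum to zero
  have hsumr : ∑ i, vr i = 0 := by
    funext k
    have h0 := congrFun hsum k
    simp only [Finset.sum_apply, Pi.zero_apply] at h0 ⊢
    rw [Finset.sum_congr rfl (fun i _ => hvr i k)]
    exact_mod_cast congrArg (Int.cast : ℤ → ℝ) h0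
  -- real bases
  have hBex : ∀ i, ∃ B : Module.Basis {j : Fin (n + 1) // j ≠ i} ℝ (Fin n → ℝ), ∀ j, B j = vr j :=
    fun i => exists_basisR v hvr i (hbasis i).2
  choose Br hBr using hBex
  have hinj : Function.Injective vr := vr_injective v hsum hvr hbasis
  -- rephrase Δ
  have hΔ' : ∀ σ, σ ∈ Δ ↔ ∃ S : Finset (Fin (n + 1)), S ≠ Finset.univ ∧ σ = cone vr S := by
    intro σ; rw [hΔ]; rfl
  have hex : ∀ S : Finset (Fin (n + 1)), S ≠ Finset.univ → ∃ i₀, i₀ ∉ S := by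
    intro S hS
    by_contra h; push_neg at h; exact hS (Finset.eq_univ_of_forall h)
  refine ⟨⟨?_, ?_, ?_, ?_⟩, ?_, ?_, exists_psi v hsum hbasis w hw hwlast⟩
  · -- finite
    refine Set.Finite.subset (Set.finite_univ.image
      (fun S : Finset (Fin (n + 1)) => cone vr S)) ?_
    intro σ hσ
    obtain ⟨S, -, rfl⟩ := (hΔ' σ).mp hσ
    exact ⟨S, trivial, rfl⟩
  · -- polyhedral and strongly convex
    intro σ hσ
    obtain ⟨S, hSne, rfl⟩ := (hΔ' σ).mp hσ
    obtain ⟨i₀, hi₀⟩ := hex S hSne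
    exact ⟨isPolyhedral_cone hinj S, stronglyConvex_cone (hBr i₀) hi₀⟩
  · -- closed under faces
    intro σ hσ τ hτ
    obtain ⟨S, hSne, rfl⟩ := (hΔ' σ).mp hσ
    obtain ⟨f, hf, hτeq⟩ := hτ
    set S' : Finset (Fin (n + 1)) := S.filter (fun k => f (vr k) = 0) with hS'
    have hS'sub : S' ⊆ S := Finset.filter_subset _ _
    have hS'ne : S' ≠ Finset.univ := fun h =>
      hSne (Finset.univ_subset_iff.mp (h ▸ hS'sub))
    have hτcone : τ = cone vr S' := by
      rw [hτeq]
      ext x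
      simp only [Set.mem_setOf_eq]
      constructor
      · rintro ⟨⟨c, hc, rfl⟩, hfx⟩
        have hfx' : ∑ k ∈ S, c k * f (vr k) = 0 := by
          rw [← hfx, map_sum]
          exact Finset.sum_congr rfl fun k _ => by rw [map_smul, smul_eq_mul]
        have hterm : ∀ k ∈ S, c k * f (vr k) = 0 :=
          (Finset.sum_eq_zero_iff_of_nonneg (fun k hk =>
            mul_nonneg (hc k) (hf _ (mem_cone_self hk)))).mp hfx'
        refine ⟨c, hc, ?_⟩
        refine (Finset.sum_subset hS'sub (fun k hk hk' => ?_)).symm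
        have hfk : f (vr k) ≠ 0 := fun h0 =>
          hk' (by rw [hS']; exact Finset.mem_filter.mpr ⟨hk, h0⟩)
        rcases mul_eq_zero.mp (hterm k hk) with h | h
        · rw [h, zero_smul]
        · exact absurd h hfk
      · rintro ⟨c, hc, rfl⟩
        refine ⟨cone_mono hS'sub ⟨c, hc, rfl⟩, ?_⟩
        rw [map_sum]
        refine Finset.sum_eq_zero fun k hk => ?_
        rw [map_smul, (Finset.mem_filter.mp hk).2, smul_zero]
    rw [hτcone, hΔ']
    exact ⟨S', hS'ne, rfl⟩
  · -- intersections are faces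
    intro σ hσ σ' hσ'
    obtain ⟨S, hSne, rfl⟩ := (hΔ' σ).mp hσ
    obtain ⟨T, hTne, rfl⟩ := (hΔ' σ').mp hσ'
    obtain ⟨i₀, hi₀⟩ := hex S hSne
    obtain ⟨i₁, hi₁⟩ := hex T hTne
    have hint : cone vr S ∩ cone vr T = cone vr (S ∩ T) := by
      refine Set.Subset.antisymm (cone_inter_subset (hBr i₀) hsumr hi₀ hTne) ?_
      exact Set.subset_inter (cone_mono Finset.inter_subset_left)
        (cone_mono Finset.inter_subset_right)
    rw [hint]
    exact ⟨isFaceOf_cone (hBr i₀) hi₀ Finset.inter_subset_left,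
      isFaceOf_cone (hBr i₁) hi₁ Finset.inter_subset_right⟩
  · -- covering
    ext x
    simp only [Set.mem_sUnion, Set.mem_univ, iff_true]
    obtain ⟨S, hSne, hxS⟩ := covering (hBr (Fin.last n)) hsumr x
    exact ⟨cone vr S, (hΔ' _).mpr ⟨S, hSne, rfl⟩, hxS⟩
  · -- real linear independence
    intro i
    have h := (Br i).linearIndependent
    have hcoe : ⇑(Br i) = fun j : {j : Fin (n + 1) // j ≠ i} => vr (j : Fin (n + 1)) :=
      funext (hBr i)
    rwa [hcoe] at h
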